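/- If Γ is a disconnected homomorphism homogeneous oriented graph, then any two of its weakly connected components have the same age, i.e., the same class of finite oriented graphs embeddable in them. -/

import Mathlib

def IsOriented {V : Type*} (E : V → V → Prop) : Prop := ∀ x y, E x y → ¬ E y x

def IsLocHom {V : Type*} (E : V → V → Prop) (A : Finset V) (f : V → V) : Prop :=
  ∀ x ∈ A, ∀ y ∈ A, E x y → E (f x) (f y)

def IsHH {V : Type*} (E : V → V → Prop) : Prop :=
  ∀ (A : Finset V) (f : V → V), IsLocHom E A f →
    ∃ g : V → V, (∀ x y, E x y → E (g x) (g y)) ∧ ∀ x ∈ A, g x = f x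

section aux

variable {V : Type*} (E : V → V → Prop)

local notation "W" => Relation.ReflTransGen (fun s t => E s t ∨ E t s)

lemma w_symm {a b : V} (h : W a b) : W b a :=
  (@Relation.ReflTransGen.symmetric _ _ ⟨fun _ _ h => h.symm⟩).symm _ _ h

lemma w_map {g : V → V} (hg : ∀ x y, E x y → E (g x) (g y)) {a b : V} (h : W a b) :
    W (g a) (g b) := by
  induction h with
  | refl => exact Relation.ReflTransGen.refl
  | tail _ hr ih =>
      exact ih.tail (hr.elim (fun h => Or.inl (hg _ _ h)) (fun h => Or.inr (hg _ _ h)))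

lemma no_loop (hor : IsOriented E) (x : V) : ¬ E x x := fun h => hor x x h h

/-- there is a vertex not weakly connected to `a` -/
lemma exists_far (hdisc : ∃ x y : V, ¬ W x y) (a : V) : ∃ c : V, ¬ W a c := by
  obtain ⟨x, y, hxy⟩ := hdisc
  by_cases hax : W a x
  · exact ⟨y, fun hay => hxy ((w_symm E hax).trans hay)⟩
  · exact ⟨x, hax⟩

/-- tournament: two distinct weakly connected vertices are adjacent -/
lemma tourn (hor : IsOriented E) (hhh : IsHH E) (hdisc : ∃ x y : V, ¬ W x y)
    {a b : V} (hne : a ≠ b) (hab : W a b) : E a b ∨ E b a := by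
  by_contra hadj
  push_neg at hadj
  obtain ⟨c, hc⟩ := exists_far E hdisc a
  classical
  have hloc : IsLocHom E {a, b} (fun z => if z = b then c else z) := by
    intro x hx y hy hxy
    simp only [Finset.mem_insert, Finset.mem_singleton] at hx hy
    rcases hx with rfl | rfl <;> rcases hy with rfl | rfl
    · exact absurd hxy (no_loop E hor _)
    · exact absurd hxy hadj.1
    · exact absurd hxy hadj.2
    · exact absurd hxy (no_loop E hor _)
  obtain ⟨g, hg, hga⟩ := hhh _ _ hloc
  have h1 : g a = a := by
    have := hga a (by simp)
    simpa [hne] using this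
  have h2 : g b = c := by
    have := hga b (by simp)
    simpa using this
  have := w_map E hg hab
  rw [h1, h2] at this
  exact hc this

end aux

theorem components_same_age {V : Type*} (E : V → V → Prop)
    (hor : IsOriented E) (hhh : IsHH E)
    (hdisc : ∃ x y : V, ¬ Relation.ReflTransGen (fun a b => E a b ∨ E b a) x y) :
    ∀ u v : V, ∀ A : Finset V,
      (∀ a ∈ A, Relation.ReflTransGen (fun s t => E s t ∨ E t s) u a) →
      ∃ g : V → V, Set.InjOn g A ∧
        (∀ a ∈ A, Relation.ReflTransGen (fun s t => E s t ∨ E t s) v (g a)) ∧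
        (∀ a ∈ A, ∀ b ∈ A, (E a b ↔ E (g a) (g b))) := by
  classical
  intro u v A hA
  by_cases huv : Relation.ReflTransGen (fun s t => E s t ∨ E t s) u v
  · refine ⟨id, Function.injective_id.injOn, fun a ha => (w_symm E huv).trans (hA a ha),
      fun a _ b _ => Iff.rfl⟩
  · rcases A.eq_empty_or_nonempty with rfl | ⟨a₀, ha₀⟩
    · exact ⟨id, by simp, by simp, by simp⟩
    · -- constant map to v on {a₀} is a local hom
      have hloc : IsLocHom E {a₀} (fun _ => v) := by
        intro x hx y hy hxy
        simp only [Finset.mem_singleton] at hx hy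
        subst hx; subst hy
        exact absurd hxy (no_loop E hor _)
      obtain ⟨g, hg, hga⟩ := hhh _ _ hloc
      have hga₀ : g a₀ = v := by simpa using hga a₀ (by simp)
      have hW : ∀ a ∈ A, Relation.ReflTransGen (fun s t => E s t ∨ E t s) a₀ a :=
        fun a ha => (w_symm E (hA a₀ ha₀)).trans (hA a ha)
      have hvg : ∀ a ∈ A, Relation.ReflTransGen (fun s t => E s t ∨ E t s) v (g a) := by
        intro a ha
        have := w_map E hg (hW a ha)
        rwa [hga₀] at this
      have hadj : ∀ a ∈ A, ∀ b ∈ A, a ≠ b → E a b ∨ E b a := by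
        intro a ha b hb hne
        exact tourn E hor hhh hdisc hne ((w_symm E (hW a ha)).trans (hW b hb))
      refine ⟨g, ?_, hvg, ?_⟩
      · intro a ha b hb hgab
        by_contra hne
        rcases hadj a ha b hb hne with h | h
        · exact no_loop E hor (g a) (hgab ▸ hg a b h)
        · exact no_loop E hor (g b) (hgab ▸ hg b a h)
      · intro a ha b hb
        constructor
        · exact hg a b
        · intro hgab
          rcases eq_or_ne a b with rfl | hne
          · exact absurd hgab (no_loop E hor (g a))
          · rcases hadj a ha b hb hne with h | h
            · exact h
            · exact absurd hgab (hor _ _ (hg b a h))
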